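/- Let p₀ be the degree-≤5 polynomial matching cell averages ū_{i-1}, ū_i, ū_{i+1} and first-order moments v̄_{i-1}, v̄_i, v̄_{i+1} on three consecutive uniform cells. Then p₀(x_i − (√5/10)Δx) = −((101√5/5400) + 1/24)ū_{i-1} + (13/12)ū_i + ((101√5/5400) − 1/24)ū_{i+1} − (3/20 + 841√5/13500)v̄_{i-1} − (10289√5/6750)v̄_i + (3/20 − 841√5/13500)v̄_{i+1}. -/

import Mathlib

open intervalIntegral

lemma ipoly6 (d0 d1 d2 d3 d4 d5 d6 a b : ℝ) :
    (∫ x in a..b, (d0 + d1 * x + d2 * x^2 + d3 * x^3 + d4 * x^4 + d5 * x^5 + d6 * x^6))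
    = (d0*b + d1/2*b^2 + d2/3*b^3 + d3/4*b^4 + d4/5*b^5 + d5/6*b^6 + d6/7*b^7)
      - (d0*a + d1/2*a^2 + d2/3*a^3 + d3/4*a^4 + d4/5*a^5 + d5/6*a^6 + d6/7*a^7) := by
  have h : ∀ x ∈ Set.uIcc a b, HasDerivAt
      (fun y : ℝ => d0*y + d1/2*y^2 + d2/3*y^3 + d3/4*y^4 + d4/5*y^5 + d5/6*y^6 + d6/7*y^7)
      (d0 + d1 * x + d2 * x^2 + d3 * x^3 + d4 * x^4 + d5 * x^5 + d6 * x^6) x := by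
    intro x _
    have H := (((((((hasDerivAt_id x).const_mul d0).add
      ((hasDerivAt_pow 2 x).const_mul (d1/2))).add
      ((hasDerivAt_pow 3 x).const_mul (d2/3))).add
      ((hasDerivAt_pow 4 x).const_mul (d3/4))).add
      ((hasDerivAt_pow 5 x).const_mul (d4/5))).add
      ((hasDerivAt_pow 6 x).const_mul (d5/6))).add
      ((hasDerivAt_pow 7 x).const_mul (d6/7))
    refine H.congr_deriv ?_
    push_cast
    ring
  have hint : IntervalIntegrable
      (fun x : ℝ => d0 + d1 * x + d2 * x^2 + d3 * x^3 + d4 * x^4 + d5 * x^5 + d6 * x^6)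
      MeasureTheory.volume a b := by
    apply Continuous.intervalIntegrable
    continuity
  exact intervalIntegral.integral_eq_sub_of_hasDerivAt h hint

lemma ipoly5 (c0 c1 c2 c3 c4 c5 a b : ℝ) :
    (∫ x in a..b, (c0 + c1 * x + c2 * x^2 + c3 * x^3 + c4 * x^4 + c5 * x^5))
    = (c0*b + c1/2*b^2 + c2/3*b^3 + c3/4*b^4 + c4/5*b^5 + c5/6*b^6)
      - (c0*a + c1/2*a^2 + c2/3*a^3 + c3/4*a^4 + c4/5*a^5 + c5/6*a^6) := by
  have h : ∀ x ∈ Set.uIcc a b, HasDerivAt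
      (fun y : ℝ => c0*y + c1/2*y^2 + c2/3*y^3 + c3/4*y^4 + c4/5*y^5 + c5/6*y^6)
      (c0 + c1 * x + c2 * x^2 + c3 * x^3 + c4 * x^4 + c5 * x^5) x := by
    intro x _
    have H := ((((((hasDerivAt_id x).const_mul c0).add
      ((hasDerivAt_pow 2 x).const_mul (c1/2))).add
      ((hasDerivAt_pow 3 x).const_mul (c2/3))).add
      ((hasDerivAt_pow 4 x).const_mul (c3/4))).add
      ((hasDerivAt_pow 5 x).const_mul (c4/5))).add
      ((hasDerivAt_pow 6 x).const_mul (c5/6))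
    refine H.congr_deriv ?_
    push_cast
    ring
  have hint : IntervalIntegrable
      (fun x : ℝ => c0 + c1 * x + c2 * x^2 + c3 * x^3 + c4 * x^4 + c5 * x^5)
      MeasureTheory.volume a b := by
    apply Continuous.intervalIntegrable
    continuity
  exact intervalIntegral.integral_eq_sub_of_hasDerivAt h hint

lemma ipoly5mul (c0 c1 c2 c3 c4 c5 m d a b : ℝ) :
    (∫ x in a..b, (c0 + c1 * x + c2 * x^2 + c3 * x^3 + c4 * x^4 + c5 * x^5) * ((x - m)/d))
    = ((-(m*c0))/d*b + (c0-m*c1)/d/2*b^2 + (c1-m*c2)/d/3*b^3 + (c2-m*c3)/d/4*b^4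
        + (c3-m*c4)/d/5*b^5 + (c4-m*c5)/d/6*b^6 + (c5/d)/7*b^7)
      - ((-(m*c0))/d*a + (c0-m*c1)/d/2*a^2 + (c1-m*c2)/d/3*a^3 + (c2-m*c3)/d/4*a^4
        + (c3-m*c4)/d/5*a^5 + (c4-m*c5)/d/6*a^6 + (c5/d)/7*a^7) := by
  have key : ∀ x : ℝ, (c0 + c1 * x + c2 * x^2 + c3 * x^3 + c4 * x^4 + c5 * x^5) * ((x - m)/d)
      = (-(m*c0))/d + (c0-m*c1)/d * x + (c1-m*c2)/d * x^2 + (c2-m*c3)/d * x^3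
        + (c3-m*c4)/d * x^4 + (c4-m*c5)/d * x^5 + (c5/d) * x^6 := by
    intro x; ring
  simp only [key]
  exact ipoly6 _ _ _ _ _ _ _ a b

set_option maxHeartbeats 2000000 in
theorem stmt_17 (Δx xi ubarm1 ubar0 ubarp1 vbarm1 vbar0 vbarp1 : ℝ) (hΔx : 0 < Δx)
    (c0 c1 c2 c3 c4 c5 : ℝ) (p : ℝ → ℝ)
    (hp : ∀ x, p x = c0 + c1 * x + c2 * x^2 + c3 * x^3 + c4 * x^4 + c5 * x^5)
    (havgm1 : (1/Δx) * ∫ x in (xi - 3/2 * Δx)..(xi - 1/2 * Δx), p x = ubarm1)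
    (havg0 : (1/Δx) * ∫ x in (xi - 1/2 * Δx)..(xi + 1/2 * Δx), p x = ubar0)
    (havgp1 : (1/Δx) * ∫ x in (xi + 1/2 * Δx)..(xi + 3/2 * Δx), p x = ubarp1)
    (hmomm1 : (1/Δx) * ∫ x in (xi - 3/2 * Δx)..(xi - 1/2 * Δx),
        p x * ((x - (xi - Δx))/Δx) = vbarm1)
    (hmom0 : (1/Δx) * ∫ x in (xi - 1/2 * Δx)..(xi + 1/2 * Δx),
        p x * ((x - xi)/Δx) = vbar0)
    (hmomp1 : (1/Δx) * ∫ x in (xi + 1/2 * Δx)..(xi + 3/2 * Δx),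
        p x * ((x - (xi + Δx))/Δx) = vbarp1) :
    p (xi - Real.sqrt 5 / 10 * Δx)
      = -(101 * Real.sqrt 5 / 5400 + 1/24) * ubarm1 + (13/12) * ubar0
        + (101 * Real.sqrt 5 / 5400 - 1/24) * ubarp1
        - (3/20 + 841 * Real.sqrt 5 / 13500) * vbarm1
        - (10289 * Real.sqrt 5 / 6750) * vbar0
        + (3/20 - 841 * Real.sqrt 5 / 13500) * vbarp1 := by
  set s := Real.sqrt 5 with hsdef
  have hs : s^2 = 5 := Real.sq_sqrt (by norm_num)
  have hne : Δx ≠ 0 := ne_of_gt hΔx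
  have hx0 : ∀ x, p x * ((x - xi)/Δx) = p x * ((x - (xi + 0 * Δx))/Δx) := by
    intro x; ring_nf
  simp only [hp] at havgm1 havg0 havgp1 hmomm1 hmom0 hmomp1 ⊢
  rw [ipoly5] at havgm1 havg0 havgp1
  rw [ipoly5mul] at hmomm1 hmom0 hmomp1
  have hum1 : ubarm1 = (-91/48)*c5*Δx^5 + (121/16)*c5*xi*Δx^4 + (-25/2)*c5*xi^2*Δx^3 + (65/6)*c5*xi^3*Δx^2 + (-5)*c5*xi^4*Δx + (1)*c5*xi^5 + (121/80)*c4*Δx^4 + (-5)*c4*xi*Δx^3 + (13/2)*c4*xi^2*Δx^2 + (-4)*c4*xi^3*Δx + (1)*c4*xi^4 + (-5/4)*c3*Δx^3 + (13/4)*c3*xi*Δx^2 + (-3)*c3*xi^2*Δx + (1)*c3*xi^3 + (13/12)*c2*Δx^2 + (-2)*c2*xi*Δx + (1)*c2*xi^2 + (-1)*c1*Δx + (1)*c1*xi + (1)*c0 := by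
    rw [← havgm1]; field_simp; ring
  have hu0 : ubar0 = (1/16)*c5*xi*Δx^4 + (5/6)*c5*xi^3*Δx^2 + (1)*c5*xi^5 + (1/80)*c4*Δx^4 + (1/2)*c4*xi^2*Δx^2 + (1)*c4*xi^4 + (1/4)*c3*xi*Δx^2 + (1)*c3*xi^3 + (1/12)*c2*Δx^2 + (1)*c2*xi^2 + (1)*c1*xi + (1)*c0 := by
    rw [← havg0]; field_simp; ring
  have hup1 : ubarp1 = (91/48)*c5*Δx^5 + (121/16)*c5*xi*Δx^4 + (25/2)*c5*xi^2*Δx^3 + (65/6)*c5*xi^3*Δx^2 + (5)*c5*xi^4*Δx + (1)*c5*xi^5 + (121/80)*c4*Δx^4 + (5)*c4*xi*Δx^3 + (13/2)*c4*xi^2*Δx^2 + (4)*c4*xi^3*Δx + (1)*c4*xi^4 + (5/4)*c3*Δx^3 + (13/4)*c3*xi*Δx^2 + (3)*c3*xi^2*Δx + (1)*c3*xi^3 + (13/12)*c2*Δx^2 + (2)*c2*xi*Δx + (1)*c2*xi^2 + (1)*c1*Δx + (1)*c1*xi + (1)*c0 := by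
    rw [← havgp1]; field_simp; ring
  have hvm1 : vbarm1 = (731/1344)*c5*Δx^5 + (-23/12)*c5*xi*Δx^4 + (21/8)*c5*xi^2*Δx^3 + (-5/3)*c5*xi^3*Δx^2 + (5/12)*c5*xi^4*Δx + (-23/60)*c4*Δx^4 + (21/20)*c4*xi*Δx^3 + (-1)*c4*xi^2*Δx^2 + (1/3)*c4*xi^3*Δx + (21/80)*c3*Δx^3 + (-1/2)*c3*xi*Δx^2 + (1/4)*c3*xi^2*Δx + (-1/6)*c2*Δx^2 + (1/6)*c2*xi*Δx + (1/12)*c1*Δx := by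
    rw [← hmomm1]; field_simp; ring
  have hv0 : vbar0 = (1/448)*c5*Δx^5 + (1/8)*c5*xi^2*Δx^3 + (5/12)*c5*xi^4*Δx + (1/20)*c4*xi*Δx^3 + (1/3)*c4*xi^3*Δx + (1/80)*c3*Δx^3 + (1/4)*c3*xi^2*Δx + (1/6)*c2*xi*Δx + (1/12)*c1*Δx := by
    rw [← hmom0]; field_simp; ring
  have hvp1 : vbarp1 = (731/1344)*c5*Δx^5 + (23/12)*c5*xi*Δx^4 + (21/8)*c5*xi^2*Δx^3 + (5/3)*c5*xi^3*Δx^2 + (5/12)*c5*xi^4*Δx + (23/60)*c4*Δx^4 + (21/20)*c4*xi*Δx^3 + (1)*c4*xi^2*Δx^2 + (1/3)*c4*xi^3*Δx + (21/80)*c3*Δx^3 + (1/2)*c3*xi*Δx^2 + (1/4)*c3*xi^2*Δx + (1/6)*c2*Δx^2 + (1/6)*c2*xi*Δx + (1/12)*c1*Δx := by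
    rw [← hmomp1]; field_simp; ring
  rw [hum1, hu0, hup1, hvm1, hv0, hvp1]
  linear_combination ((-1/20000)*c5*Δx^5*s + (-1/100000)*c5*Δx^5*s^3 + (1/400)*c5*xi*Δx^4 + (1/2000)*c5*xi*Δx^4*s^2 + (-1/100)*c5*xi^2*Δx^3*s + (1/10)*c5*xi^3*Δx^2 + (1/2000)*c4*Δx^4 + (1/10000)*c4*Δx^4*s^2 + (-1/250)*c4*xi*Δx^3*s + (3/50)*c4*xi^2*Δx^2 + (-1/1000)*c3*Δx^3*s + (3/100)*c3*xi*Δx^2 + (1/100)*c2*Δx^2) * hs
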